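/- Let M be a nonempty finite set and 𝒫 a partition of M. Call a function f : M → M 𝒫-avoiding if for every x ∈ M, x and f(x) lie in different partition classes of 𝒫. Then the following are equivalent: (1) some class of 𝒫 has more than |M|/2 elements; (2) there is no 𝒫-avoiding permutation of M. -/

import Mathlib

/-- For a partition `C` of a nonempty finite set `M`: some class of `C` has more than
`|M|/2` elements iff there is no permutation `f` of `M` such that `x` and `f x` always lie
in different classes. -/
theorem stmt_6 {M : Type*} [Fintype M] [Nonempty M] (C : Set (Set M))
    (hC : Setoid.IsPartition C) :
    (∃ P ∈ C, Fintype.card M < 2 * P.ncard) ↔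
    ¬∃ f : Equiv.Perm M, ∀ x : M, ∀ P ∈ C, x ∈ P → f x ∉ P := by
  classical
  -- the class of x
  have hcl : ∀ x : M, ∃ P, (P ∈ C ∧ x ∈ P) ∧ ∀ Q, Q ∈ C ∧ x ∈ Q → Q = P := fun x => hC.2 x
  set cl : M → Set M := fun x => (hcl x).choose with hcldef
  have hclC : ∀ x, cl x ∈ C := fun x => (hcl x).choose_spec.1.1
  have hclmem : ∀ x, x ∈ cl x := fun x => (hcl x).choose_spec.1.2
  have hcluniq : ∀ x P, P ∈ C → x ∈ P → P = cl x := fun x P hP hx =>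
    (hcl x).choose_spec.2 P ⟨hP, hx⟩
  constructor
  · -- big class ⇒ no avoiding permutation
    rintro ⟨P, hPC, hP⟩ ⟨f, hf⟩
    have himg : (f '' P) ⊆ Pᶜ := by
      rintro _ ⟨x, hx, rfl⟩
      exact hf x P hPC hx
    have h1 : (f '' P).ncard = P.ncard := Set.ncard_image_of_injective _ f.injective
    have h2 : (f '' P).ncard ≤ (Pᶜ).ncard :=
      Set.ncard_le_ncard himg (Set.toFinite _)
    have h3 : P.ncard + (Pᶜ).ncard = Fintype.card M := by
      rw [Set.ncard_add_ncard_compl, Nat.card_eq_fintype_card]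
    omega
  · -- all classes small ⇒ avoiding permutation exists (via Hall's theorem)
    intro hno
    by_contra hbig
    push_neg at hbig
    apply hno
    set n := Fintype.card M
    have hsmall : ∀ P ∈ C, 2 * P.ncard ≤ n := fun P hP => hbig P hP
    set t : M → Finset M := fun x => (cl x)ᶜ.toFinset with htdef
    have hcard : ∀ x, (t x).card = n - (cl x).ncard := by
      intro x
      rw [htdef]
      simp only [Set.toFinset_compl, Finset.card_compl, Set.ncard_eq_toFinset_card']
      rfl
    have hall : ∀ s : Finset M, s.card ≤ (s.biUnion t).card := by
      intro s
      by_cases hs : ∃ x ∈ s, ∃ y ∈ s, cl x ≠ cl y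
      · obtain ⟨x, hx, y, hy, hxy⟩ := hs
        have : Finset.univ ⊆ s.biUnion t := by
          intro z _
          rw [Finset.mem_biUnion]
          by_cases hz : z ∈ cl x
          · refine ⟨y, hy, ?_⟩
            simp only [htdef, Set.mem_toFinset, Set.mem_compl_iff]
            intro hz'
            exact hxy ((hcluniq z (cl x) (hclC x) hz).trans
              (hcluniq z (cl y) (hclC y) hz').symm)
          · exact ⟨x, hx, by simpa [htdef] using hz⟩
        calc s.card ≤ Finset.univ.card := Finset.card_le_card (Finset.subset_univ s)
          _ ≤ (s.biUnion t).card := Finset.card_le_card this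
      · push_neg at hs
        rcases Finset.eq_empty_or_nonempty s with rfl | ⟨x, hx⟩
        · simp
        · have hsub : s ⊆ (cl x).toFinset := by
            intro z hz
            rw [Set.mem_toFinset, ← hs z hz x hx]
            exact hclmem z
          have h1 : s.card ≤ (cl x).ncard := by
            rw [Set.ncard_eq_toFinset_card']
            exact Finset.card_le_card hsub
          have h2 : (cl x).ncard ≤ n - (cl x).ncard := by
            have := hsmall (cl x) (hclC x)
            have hle : (cl x).ncard ≤ n := by
              rw [Set.ncard_eq_toFinset_card']
              exact Finset.card_le_univ _
            omega
          have h3 : (t x).card ≤ (s.biUnion t).card :=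
            Finset.card_le_card (Finset.subset_biUnion_of_mem t hx)
          rw [hcard x] at h3
          omega
    obtain ⟨f, hfinj, hft⟩ := (Finset.all_card_le_biUnion_card_iff_exists_injective t).mp hall
    refine ⟨Equiv.ofBijective f (Finite.injective_iff_bijective.mp hfinj), ?_⟩
    intro x P hP hx
    rw [hcluniq x P hP hx]
    have := hft x
    simpa [htdef, Equiv.ofBijective_apply] using this
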